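/- Let γ be a modulus function. Then every countable subset of ℝ is closed in the γ-density topology τ_γ. Consequently (ℝ, τ_γ) is not separable, and every τ_γ-compact subset of ℝ is finite. -/

import Mathlib

open MeasureTheory Set Filter Topology

/-- γ is a modulus function (on [0,∞); values and hypotheses only matter for nonnegative arguments). -/
def IsModulus (γ : ℝ → ℝ) : Prop :=
  (∀ a, 0 ≤ a → 0 ≤ γ a) ∧
  (∀ a, 0 ≤ a → (γ a = 0 ↔ a = 0)) ∧
  (∀ a b, 0 ≤ a → 0 ≤ b → γ (a + b) ≤ γ a + γ b) ∧
  ContinuousWithinAt γ (Set.Ici 0) 0 ∧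
  (∀ a b, 0 ≤ a → a ≤ b → γ a ≤ γ b)

/-- |(x-α, x+α) ∩ Aᶜ| -/
noncomputable def mInt (A : Set ℝ) (x α : ℝ) : ℝ :=
  (volume (Set.Ioo (x - α) (x + α) ∩ Aᶜ)).toReal

/-- x is a γ-density point of A. -/
def IsGammaDensityPt (γ : ℝ → ℝ) (A : Set ℝ) (x : ℝ) : Prop :=
  Tendsto (fun α => γ (mInt A x α) / γ (2 * α)) (𝓝[>] (0:ℝ)) (𝓝 0)

/-- x is a Lebesgue density point of A. -/
def IsLebDensityPt (A : Set ℝ) (x : ℝ) : Prop :=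
  Tendsto (fun α => mInt A x α / (2 * α)) (𝓝[>] (0:ℝ)) (𝓝 0)

/-- The γ-density family. -/
def Tgamma (γ : ℝ → ℝ) : Set (Set ℝ) :=
  {A : Set ℝ | MeasurableSet A ∧ A ⊆ {x : ℝ | IsGammaDensityPt γ A x}}

/-- The γ-density topology (generated by the γ-density family, which is a topology). -/
def tauGamma (γ : ℝ → ℝ) : TopologicalSpace ℝ :=
  TopologicalSpace.generateFrom (Tgamma γ)

theorem stmt17 (γ : ℝ → ℝ) (hγ : IsModulus γ) :
    (∀ C : Set ℝ, C.Countable → IsClosed[tauGamma γ] C) ∧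
    ¬ @TopologicalSpace.SeparableSpace ℝ (tauGamma γ) ∧
    (∀ K : Set ℝ, @IsCompact ℝ (tauGamma γ) K → K.Finite) := by
  have hγ0 : γ 0 = 0 := (hγ.2.1 0 le_rfl).mpr rfl
  have hclosed : ∀ C : Set ℝ, C.Countable → IsClosed[tauGamma γ] C := by
    intro C hC
    have hCm : MeasurableSet C := hC.measurableSet
    have hmem : Cᶜ ∈ Tgamma γ := by
      refine ⟨hCm.compl, fun x _ => ?_⟩
      have hz : ∀ α : ℝ, mInt Cᶜ x α = 0 := by
        intro α
        unfold mInt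
        rw [compl_compl]
        have : volume (Set.Ioo (x - α) (x + α) ∩ C) = 0 :=
          measure_mono_null inter_subset_right (hC.measure_zero _)
        simp [this]
      show Tendsto _ _ _
      simp only [hz, hγ0, zero_div]
      exact tendsto_const_nhds
    exact @IsClosed.mk ℝ (tauGamma γ) C (TopologicalSpace.GenerateOpen.basic _ hmem)
  refine ⟨hclosed, ?_, ?_⟩
  · intro h
    obtain ⟨D, hDc, hDd⟩ := h.exists_countable_dense
    have h1 : @closure ℝ (tauGamma γ) D = D :=
      @IsClosed.closure_eq ℝ (tauGamma γ) D (hclosed D hDc)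
    have h2 : @closure ℝ (tauGamma γ) D = Set.univ :=
      @Dense.closure_eq ℝ (tauGamma γ) D hDd
    rw [h1] at h2
    exact Set.not_countable_univ (h2 ▸ hDc)
  · intro K hK
    by_contra hfin
    have hinf : K.Infinite := hfin
    obtain f := hinf.natEmbedding
    set S : Set ℝ := Set.range (fun n => (f n : ℝ)) with hS
    have hScnt : S.Countable := Set.countable_range _
    have hUopen : ∀ n : ℕ, IsOpen[tauGamma γ] (S \ {(f n : ℝ)})ᶜ := fun n =>
      @IsClosed.isOpen_compl ℝ (tauGamma γ) _ (hclosed _ (hScnt.mono (diff_subset)))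
    have hcov : K ⊆ ⋃ n : ℕ, (S \ {(f n : ℝ)})ᶜ := by
      intro x _
      by_cases hx : x ∈ S
      · obtain ⟨n, rfl⟩ := hx
        exact mem_iUnion.mpr ⟨n, fun h => h.2 rfl⟩
      · exact mem_iUnion.mpr ⟨0, fun h => hx h.1⟩
    obtain ⟨t, ht⟩ := @IsCompact.elim_finite_subcover ℝ (tauGamma γ) K ℕ hK _ hUopen hcov
    obtain ⟨m, hm⟩ := Infinite.exists_notMem_finset t
    have hmK : (f m : ℝ) ∈ K := (f m).2
    obtain ⟨n, hnt, hn⟩ := mem_iUnion₂.mp (ht hmK)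
    have : (f m : ℝ) = (f n : ℝ) := by
      by_contra hne
      exact hn ⟨⟨m, rfl⟩, hne⟩
    have : m = n := f.injective (Subtype.ext this)
    exact hm (this ▸ hnt)
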